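/- Let T₁ and T₂ be abelian rigid symmetric monoidal categories, with commutativity constraints (braidings) C^{T₁} and C^{T₂} respectively. Let F̃ : T₁ ⥤ Z(T₂) be an additive braided monoidal functor to the Drinfeld center of T₂ (a central functor from T₁ to T₂); write F for the composition of F̃ with the forgetful functor Z(T₂) → T₂, and σ_{X,Y} : F(X) ⊗ Y ≅ Y ⊗ F(X) for the half-braiding component of F̃(X) at an object Y of T₂. Let U be an object of T₂, and suppose there exist an object V of T₁ and an epimorphism f : F(V) → U such that for every object X of T₂ the following diagram commutes: σ_{V,X} followed by id_X ⊗ f equals f ⊗ id_X followed by C^{T₂}_{U,X}. Then for every object X of T₁ one has σ_{X,U} = C^{T₂}_{F(X),U}. -/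

import Mathlib

open CategoryTheory MonoidalCategory

universe v₁ v₂ u₁ u₂

/-- Let `T₁`, `T₂` be abelian rigid symmetric monoidal categories, and let
`F : T₁ ⥤ Center T₂` be an additive central functor (a braided monoidal functor to the
Drinfeld center of `T₂`), with half-braiding components
`σ_{X,Y} = ((F.obj X).2.β Y).hom : F(X) ⊗ Y ⟶ Y ⊗ F(X)`.
If `U : T₂` admits an epimorphism `f : F(V) ⟶ U` for some `V : T₁` such that for all
`X : T₂` the square `σ_{V,X} ≫ (𝟙 X ⊗ₘ f) = (f ⊗ₘ 𝟙 X) ≫ C^{T₂}_{U,X}` commutes,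
then `σ_{X,U}` coincides with the symmetry `C^{T₂}_{F(X),U}` for every `X : T₁`. -/
theorem halfBraiding_eq_braiding_of_epi_from_central
    {T₁ : Type u₁} {T₂ : Type u₂} [Category.{v₁} T₁] [Category.{v₂} T₂]
    [Abelian T₁] [Abelian T₂] [MonoidalCategory T₁] [MonoidalCategory T₂]
    [SymmetricCategory T₁] [SymmetricCategory T₂]
    [RigidCategory T₁] [RigidCategory T₂]
    (F : T₁ ⥤ Center T₂) [F.Braided] [(F ⋙ Center.forget T₂).Additive]
    (U : T₂) (V : T₁) (f : (F.obj V).1 ⟶ U) [Epi f]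
    (hf : ∀ X : T₂, ((F.obj V).2.β X).hom ≫ (𝟙 X ⊗ₘ f) = (f ⊗ₘ 𝟙 X) ≫ (β_ U X).hom) :
    ∀ X : T₁, ((F.obj X).2.β U).hom = (β_ (F.obj X).1 U).hom := by
  intro X
  set A := (F.obj X).1 with hA
  -- `σ^X_{F V} ≫ σ^V_{F X} = 𝟙`, from the braided structure of `F` and symmetry of `T₁`.
  have h2 : (β_ (F.obj X) (F.obj V)).hom ≫ (β_ (F.obj V) (F.obj X)).hom = 𝟙 _ := by
    have h : F.map ((β_ X V).hom ≫ (β_ V X).hom) = 𝟙 _ := by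
      rw [SymmetricCategory.symmetry, F.map_id]
    rw [F.map_comp, F.map_braiding, F.map_braiding] at h
    have h' := congrArg (fun g => Functor.LaxMonoidal.μ F X V ≫ g ≫
      Functor.OplaxMonoidal.δ F X V) h
    simpa using h'
  have hXV : ((F.obj X).2.β (F.obj V).1).hom ≫ ((F.obj V).2.β A).hom = 𝟙 _ := by
    have := congrArg Center.Hom.f h2
    exact this
  -- The key identity: `σ^X_{F V} ≫ (f ▷ A) = (A ◁ f) ≫ β_{A,U}`.
  have key : ((F.obj X).2.β (F.obj V).1).hom ≫ (f ▷ A) = (A ◁ f) ≫ (β_ A U).hom := by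
    have h := hf A
    rw [id_tensorHom, tensorHom_id] at h
    have h3 := congrArg (fun g => ((F.obj X).2.β (F.obj V).1).hom ≫ g) h
    simp only [← Category.assoc, hXV, Category.id_comp] at h3
    -- h3 : A ◁ f = (σ^X_{FV} ≫ f ▷ A) ≫ (β_ U A).hom
    rw [SymmetricCategory.braiding_swap_eq_inv_braiding A U] at h3
    rw [h3]
    simp
  -- Tensoring on the left with `A` preserves epimorphisms (rigidity).
  haveI : MonoidalClosed T₂ := monoidalClosedOfLeftRigidCategory T₂
  haveI : (tensorLeft A).PreservesEpimorphisms :=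
    Functor.preservesEpimorphisms_of_adjunction (ihom.adjunction A)
  haveI : Epi (A ◁ f) := (tensorLeft A).map_epi f
  rw [← cancel_epi (A ◁ f), HalfBraiding.naturality]
  exact key
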